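/- Let n be even and F : F_2^n → F_2^n be a quadratic APN function with the subspaces V_b defined via the difference functions as above. Then for every nonzero b and every c ∈ F_2^n, the square of the Walsh transform satisfies (W_F(b,c))^2 ∈ {0, 2^n · |V_b|}. In particular, the amplitude of the component function F_b equals 2^{(n + dim V_b)/2}. -/

import Mathlib

open Finset

/-- `Vec n` is the vector space `F_2^n`. -/
abbrev Vec (n : ℕ) := Fin n → ZMod 2

/-- The standard dot product on `F_2^n`. -/
def dotp {n : ℕ} (a b : Vec n) : ZMod 2 := ∑ i, a i * b i

/-- The difference (derivative) function `D_{F,a}(x) = F(x) + F(x+a)`. -/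
def Dder {n : ℕ} (F : Vec n → Vec n) (a x : Vec n) : Vec n := F x + F (x + a)

/-- The linear hyperplane `H_b = {x : ⟨b,x⟩ = 0}`. -/
def Hyp {n : ℕ} (b : Vec n) : Set (Vec n) := {x | dotp b x = 0}

/-- The affine hyperplane `H̄_b = {x : ⟨b,x⟩ = 1}`. -/
def HypBar {n : ℕ} (b : Vec n) : Set (Vec n) := {x | dotp b x = 1}

/-- `T_b = {a : image(D_{F,a}) = H_b} ∪ {0}`. -/
def Tset {n : ℕ} (F : Vec n → Vec n) (b : Vec n) : Set (Vec n) :=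
  {a | Set.range (Dder F a) = Hyp b} ∪ {0}

/-- `T̄_b = {a : image(D_{F,a}) = H̄_b}`. -/
def TsetBar {n : ℕ} (F : Vec n → Vec n) (b : Vec n) : Set (Vec n) :=
  {a | Set.range (Dder F a) = HypBar b}

/-- `V_b = T_b ∪ T̄_b`. -/
def Vset {n : ℕ} (F : Vec n → Vec n) (b : Vec n) : Set (Vec n) := Tset F b ∪ TsetBar F b

/-- `F` is quadratic: all second derivatives are constant (algebraic degree ≤ 2). -/
def IsQuadratic {n m : ℕ} (F : Vec n → Vec m) : Prop :=
  ∀ a₁ a₂ : Vec n, ∃ c : Vec m, ∀ x, F (x + a₁ + a₂) + F (x + a₁) + F (x + a₂) + F x = c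

/-- `F` is APN: every equation `F(x) + F(x+a) = b`, `a ≠ 0`, has at most 2 solutions. -/
def IsAPN {n : ℕ} (F : Vec n → Vec n) : Prop :=
  ∀ a : Vec n, a ≠ 0 → ∀ b : Vec n, Nat.card {x : Vec n // F x + F (x + a) = b} ≤ 2

/-- The Walsh transform `W_F(b,a) = Σ_x (-1)^{⟨b,F(x)⟩ + ⟨a,x⟩}`. -/
def Walsh {n m : ℕ} (F : Vec n → Vec m) (b : Vec m) (a : Vec n) : ℤ :=
  ∑ x : Vec n, (-1 : ℤ) ^ ((dotp b (F x) + dotp a x).val)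

/-- The component `F_b` is bent: `|W_F(b,a)| = 2^{n/2}` for all `a`. -/
def IsBent {n m : ℕ} (F : Vec n → Vec m) (b : Vec m) : Prop :=
  ∀ a : Vec n, (Walsh F b a) ^ 2 = 2 ^ n

/-- The set `N_F` of non-trivial non-bent components of `F`. -/
def NF {n m : ℕ} (F : Vec n → Vec m) : Set (Vec m) := {b | b ≠ 0 ∧ ¬ IsBent F b}

/-- A vector space partition of `F_q^n`: a collection of nonzero subspaces such that
every nonzero vector lies in exactly one member. -/
def IsVSP {K : Type} [Field K] {n : ℕ} (𝒱 : Finset (Submodule K (Fin n → K))) : Prop :=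
  (∀ S ∈ 𝒱, S ≠ ⊥) ∧
  ∀ x : Fin n → K, x ≠ 0 → ∃! S : Submodule K (Fin n → K), S ∈ 𝒱 ∧ x ∈ S

/-- A blocking set of `PG(m,2)` (identified with `F_2^{m+1} \ {0}`) with respect to
`k`-spaces (nonzero parts of `(k+1)`-dimensional subspaces). -/
def PGBlocking (m k : ℕ) (B : Set (Fin (m + 1) → ZMod 2)) : Prop :=
  0 ∉ B ∧ ∀ S : Submodule (ZMod 2) (Fin (m + 1) → ZMod 2),
    Module.finrank (ZMod 2) S = k + 1 → ∃ x ∈ B, x ∈ S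

/-- `F_b` has amplitude `2^{(n+k)/2}`. -/
def HasAmp {n m : ℕ} (F : Vec n → Vec m) (b : Vec m) (k : ℕ) : Prop :=
  (∀ a, (Walsh F b a) ^ 2 = 0 ∨ (Walsh F b a) ^ 2 = 2 ^ (n + k)) ∧
  ∃ a, (Walsh F b a) ^ 2 = 2 ^ (n + k)

private lemma z2add (u : ZMod 2) : u + u = 0 := by revert u; decide

private lemma vadd_self {n : ℕ} (v : Vec n) : v + v = 0 := by
  funext i; exact z2add (v i)

private lemma chi_add (u v : ZMod 2) :
    ((-1:ℤ)) ^ ((u + v).val) = (-1:ℤ) ^ u.val * (-1:ℤ) ^ v.val := by revert u v; decide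

private lemma dotp_add_right {n : ℕ} (a x y : Vec n) :
    dotp a (x + y) = dotp a x + dotp a y := by
  simp [dotp, mul_add, Finset.sum_add_distrib]

private lemma dotp_add_left {n : ℕ} (a b x : Vec n) :
    dotp (a + b) x = dotp a x + dotp b x := by
  simp [dotp, add_mul, Finset.sum_add_distrib]

private lemma dotp_zero_right {n : ℕ} (a : Vec n) : dotp a 0 = 0 := by simp [dotp]
private lemma dotp_comm {n : ℕ} (a b : Vec n) : dotp a b = dotp b a := by
  simp [dotp, mul_comm]

private lemma exists_dotp_one {n : ℕ} {b : Vec n} (hb : b ≠ 0) : ∃ y, dotp b y = 1 := by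
  have h1 : ∃ i, b i ≠ 0 := by
    by_contra h; push_neg at h; exact hb (funext fun i => h i)
  obtain ⟨i, hi⟩ := h1
  have hbi : b i = 1 := by
    have : ∀ u : ZMod 2, u ≠ 0 → u = 1 := by decide
    exact this _ hi
  refine ⟨Pi.single i 1, ?_⟩
  rw [dotp, Finset.sum_eq_single i]
  · simp [hbi]
  · intro j _ hj; simp [Pi.single_eq_of_ne hj]
  · intro h; exact absurd (mem_univ i) h

private lemma chi_flip (u : ZMod 2) : ((-1:ℤ)) ^ ((u + 1).val) = -(-1:ℤ) ^ u.val := by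
  revert u; decide

/-- Character sum over a group vanishes for a nontrivial additive map. -/
private lemma sum_chi_zero {G : Type} [AddCommGroup G] [Fintype G] (g : G → ZMod 2)
    (hadd : ∀ x y, g (x + y) = g x + g y) (hne : ∃ y, g y = 1) :
    ∑ x : G, (-1:ℤ) ^ (g x).val = 0 := by
  obtain ⟨y, hy⟩ := hne
  have h1 : ∑ x : G, (-1:ℤ) ^ (g (x + y)).val = ∑ x : G, (-1:ℤ) ^ (g x).val :=
    Fintype.sum_equiv (Equiv.addRight y) _ _ (fun x => rfl)
  have h2 : ∀ x : G, (-1:ℤ) ^ (g (x + y)).val = -(-1:ℤ) ^ (g x).val := by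
    intro x; rw [hadd, hy, chi_flip]
  rw [Finset.sum_congr rfl (fun x _ => h2 x), Finset.sum_neg_distrib] at h1
  linarith

/-- Finset version for translation-closed sets. -/
private lemma sum_chi_zero_finset {n : ℕ} (s : Finset (Vec n)) (g : Vec n → ZMod 2)
    (y : Vec n) (hclosed : ∀ a ∈ s, a + y ∈ s)
    (hadd : ∀ a ∈ s, g (a + y) = g a + 1) :
    ∑ a ∈ s, (-1:ℤ) ^ (g a).val = 0 := by
  have h1 : ∑ a ∈ s, (-1:ℤ) ^ (g (a + y)).val = ∑ a ∈ s, (-1:ℤ) ^ (g a).val := by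
    apply Finset.sum_nbij' (fun a => a + y) (fun a => a + y)
    · exact hclosed
    · exact hclosed
    · intro a _; rw [add_assoc, vadd_self, add_zero]
    · intro a _; rw [add_assoc, vadd_self, add_zero]
    · intro a _; rfl
  have h2 : ∑ a ∈ s, (-1:ℤ) ^ (g (a + y)).val = -∑ a ∈ s, (-1:ℤ) ^ (g a).val := by
    rw [← Finset.sum_neg_distrib]
    exact Finset.sum_congr rfl (fun a haa => by rw [hadd a haa, chi_flip])
  rw [h2] at h1
  linarith

/-- Splitting the derivative at `a + a'`. -/
private lemma Dder_add {n : ℕ} (F : Vec n → Vec n) (a a' z : Vec n) :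
    Dder F (a + a') z = Dder F a z + Dder F a' (z + a) := by
  show F z + F (z + (a + a')) = (F z + F (z + a)) + (F (z + a) + F (z + a + a'))
  rw [← add_assoc z a a']
  have h : ∀ u v w : Vec n, u + w = (u + v) + (v + w) := by
    intro u v w
    funext i
    have : ∀ p q r : ZMod 2, p + r = (p + q) + (q + r) := by decide
    exact this _ _ _
  exact h _ _ _

/-- The subspace of `a` for which `x ↦ ⟨b, D_{F,a}(x)⟩` is constant. -/
def Sc {n : ℕ} (F : Vec n → Vec n) (b : Vec n) : Submodule (ZMod 2) (Vec n) where
  carrier := {a | ∀ x, dotp b (Dder F a x) = dotp b (Dder F a 0)}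
  add_mem' := by
    intro a a' haS ha'S x
    calc dotp b (Dder F (a + a') x)
        = dotp b (Dder F a x) + dotp b (Dder F a' (x + a)) := by
          rw [Dder_add, dotp_add_right]
      _ = dotp b (Dder F a 0) + dotp b (Dder F a' 0) := by rw [haS x, ha'S (x + a)]
      _ = dotp b (Dder F (a + a') 0) := by
          rw [Dder_add, dotp_add_right, haS 0, ha'S (0 + a)]
  zero_mem' := by
    intro x
    simp [Dder, vadd_self, dotp_zero_right]
  smul_mem' := by
    intro c a haS
    have hc : c = 0 ∨ c = 1 := by revert c; decide
    rcases hc with rfl | rfl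
    · rw [zero_smul]
      intro x
      simp [Dder, vadd_self, dotp_zero_right]
    · rw [one_smul]; exact haS

lemma mem_Sc {n : ℕ} {F : Vec n → Vec n} {b a : Vec n} :
    a ∈ Sc F b ↔ ∀ x, dotp b (Dder F a x) = dotp b (Dder F a 0) := Iff.rfl

/-- Quadraticity: the shifted derivative component differences are constant. -/
private lemma g_shift {n : ℕ} {F : Vec n → Vec n} (hq : IsQuadratic F) (b a x y : Vec n) :
    dotp b (Dder F a (x + y)) + dotp b (Dder F a x)
      = dotp b (Dder F a y) + dotp b (Dder F a 0) := by
  obtain ⟨c, hc⟩ := hq a y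
  have key : ∀ z, Dder F a (z + y) + Dder F a z = c := by
    intro z
    have hz := hc z
    calc Dder F a (z + y) + Dder F a z
        = F (z + a + y) + F (z + a) + F (z + y) + F z := by
          show (F (z + y) + F (z + y + a)) + (F z + F (z + a)) = _
          rw [show z + y + a = z + a + y by ring]
          abel
      _ = c := hz
  have h1 := congrArg (dotp b) (key x)
  have h2 := congrArg (dotp b) (key 0)
  rw [dotp_add_right] at h1 h2
  rw [zero_add] at h2
  rw [h1, h2]

private lemma zmod2_cases (u : ZMod 2) : u = 0 ∨ u = 1 := by revert u; decide

lemma coe_Sc {n : ℕ} {F : Vec n → Vec n} (ha : IsAPN F)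
    {b : Vec n} (hb : b ≠ 0) : ((Sc F b : Submodule (ZMod 2) (Vec n)) : Set (Vec n)) = Vset F b := by
  classical
  ext a
  simp only [SetLike.mem_coe, mem_Sc]
  constructor
  · intro haS
    by_cases h0 : a = 0
    · exact Or.inl (Or.inr (by simp [h0]))
    · have hfib : ∀ v, (univ.filter (fun x => Dder F a x = v)).card ≤ 2 := by
        intro v
        have h := ha a h0 v
        rwa [Nat.card_eq_fintype_card, Fintype.card_subtype] at h
      have hcardV : (univ : Finset (Vec n)).card = 2 ^ n := by
        simp [Finset.card_univ]
      have himg : 2 ^ n ≤ 2 * (univ.image (Dder F a)).card := by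
        have h1 : (univ : Finset (Vec n)).card
            = ∑ v ∈ univ.image (Dder F a), (univ.filter (fun x => Dder F a x = v)).card :=
          Finset.card_eq_sum_card_fiberwise (fun x _ => Finset.mem_image_of_mem _ (mem_univ x))
        have h2 : ∑ v ∈ univ.image (Dder F a), (univ.filter (fun x => Dder F a x = v)).card
            ≤ ∑ _v ∈ univ.image (Dder F a), 2 := Finset.sum_le_sum fun v _ => hfib v
        rw [Finset.sum_const, smul_eq_mul] at h2
        omega
      obtain ⟨y, hy⟩ := exists_dotp_one hb
      have hcards : (univ.filter (fun x => dotp b x = 0)).card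
          = (univ.filter (fun x => dotp b x = 1)).card := by
        apply Finset.card_nbij' (fun x => x + y) (fun x => x + y)
        · intro x hx
          rw [Finset.mem_coe, Finset.mem_filter] at hx ⊢
          exact ⟨mem_univ _, by rw [dotp_add_right, hx.2, hy, zero_add]⟩
        · intro x hx
          rw [Finset.mem_coe, Finset.mem_filter] at hx ⊢
          refine ⟨mem_univ _, ?_⟩
          rw [dotp_add_right, hx.2, hy]
          decide
        · intro x _; beta_reduce; rw [add_assoc, vadd_self, add_zero]
        · intro x _; beta_reduce; rw [add_assoc, vadd_self, add_zero]
      have hsplit : (univ.filter (fun x => dotp b x = 0)).card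
          + (univ.filter (fun x => dotp b x = 1)).card = 2 ^ n := by
        have h := Finset.card_filter_add_card_filter_not
          (s := (univ : Finset (Vec n))) (p := fun x => dotp b x = 0)
        have heq : univ.filter (fun x => ¬ dotp b x = 0)
            = univ.filter (fun x => dotp b x = 1) := by
          apply Finset.filter_congr
          intro x _
          have : ∀ u : ZMod 2, (¬ u = 0) ↔ u = 1 := by decide
          exact this _
        rw [heq] at h
        omega
      rcases zmod2_cases (dotp b (Dder F a 0)) with hε | hε
      · refine Or.inl (Or.inl ?_)
        have hsub : univ.image (Dder F a) ⊆ univ.filter (fun x => dotp b x = 0) := by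
          intro v hv
          rw [Finset.mem_image] at hv
          obtain ⟨x, _, rfl⟩ := hv
          rw [Finset.mem_filter]
          exact ⟨mem_univ _, by rw [haS x, hε]⟩
        have heq := Finset.eq_of_subset_of_card_le hsub (by omega)
        show Set.range (Dder F a) = Hyp b
        ext v
        have h := Finset.ext_iff.mp heq v
        simp only [Finset.mem_image, Finset.mem_filter, mem_univ, true_and] at h
        simpa [Hyp, Set.mem_range] using h
      · refine Or.inr ?_
        have hsub : univ.image (Dder F a) ⊆ univ.filter (fun x => dotp b x = 1) := by
          intro v hv
          rw [Finset.mem_image] at hv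
          obtain ⟨x, _, rfl⟩ := hv
          rw [Finset.mem_filter]
          exact ⟨mem_univ _, by rw [haS x, hε]⟩
        have heq := Finset.eq_of_subset_of_card_le hsub (by omega)
        show Set.range (Dder F a) = HypBar b
        ext v
        have h := Finset.ext_iff.mp heq v
        simp only [Finset.mem_image, Finset.mem_filter, mem_univ, true_and] at h
        simpa [HypBar, Set.mem_range] using h
  · intro hV
    simp only [Vset, Tset, TsetBar, Set.mem_union, Set.mem_setOf_eq,
      Set.mem_singleton_iff] at hV
    rcases hV with (hT | rfl) | hT
    · intro x
      have h1 : Dder F a x ∈ Hyp b := hT ▸ Set.mem_range_self x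
      have h2 : Dder F a 0 ∈ Hyp b := hT ▸ Set.mem_range_self 0
      simp only [Hyp, Set.mem_setOf_eq] at h1 h2
      rw [h1, h2]
    · intro x
      simp [Dder, vadd_self, dotp_zero_right]
    · intro x
      have h1 : Dder F a x ∈ HypBar b := hT ▸ Set.mem_range_self x
      have h2 : Dder F a 0 ∈ HypBar b := hT ▸ Set.mem_range_self 0
      simp only [HypBar, Set.mem_setOf_eq] at h1 h2
      rw [h1, h2]

/-- Main Walsh square formula. -/
lemma walsh_sq {n : ℕ} {F : Vec n → Vec n} (hq : IsQuadratic F) (b c : Vec n) :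
    Walsh F b c ^ 2 = 2 ^ n *
      ∑ a ∈ univ.filter (fun a => ∀ x, dotp b (Dder F a x) = dotp b (Dder F a 0)),
        (-1:ℤ) ^ ((dotp c a + dotp b (Dder F a 0)).val) := by
  have e1 : Walsh F b c ^ 2
      = ∑ x : Vec n, ∑ a : Vec n,
          (-1:ℤ) ^ ((dotp b (F x) + dotp c x).val) *
          (-1:ℤ) ^ ((dotp b (F (x + a)) + dotp c (x + a)).val) := by
    rw [sq, Walsh, Finset.sum_mul_sum]
    refine Finset.sum_congr rfl fun x _ => ?_
    exact (Fintype.sum_equiv (Equiv.addLeft x) _ _ (fun a => rfl)).symm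
  have e2 : ∀ x a : Vec n,
      (-1:ℤ) ^ ((dotp b (F x) + dotp c x).val) *
      (-1:ℤ) ^ ((dotp b (F (x + a)) + dotp c (x + a)).val)
      = (-1:ℤ) ^ ((dotp b (Dder F a x) + dotp c a).val) := by
    intro x a
    rw [← chi_add]
    have h1 : dotp b (Dder F a x) = dotp b (F x) + dotp b (F (x + a)) :=
      dotp_add_right b (F x) (F (x + a))
    rw [h1, dotp_add_right c x a]
    have key : ∀ p q r s : ZMod 2, (p + q) + (r + (q + s)) = (p + r) + s := by decide
    exact congrArg (fun v => (-1:ℤ) ^ v) (congrArg ZMod.val (key _ _ _ _))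
  rw [e1]
  simp only [e2]
  rw [Finset.sum_comm]
  rw [← Finset.sum_filter_add_sum_filter_not univ
    (fun a => ∀ x, dotp b (Dder F a x) = dotp b (Dder F a 0))]
  have hzero : ∀ a ∈ univ.filter
      (fun a => ¬ ∀ x, dotp b (Dder F a x) = dotp b (Dder F a 0)),
      ∑ x : Vec n, (-1:ℤ) ^ ((dotp b (Dder F a x) + dotp c a).val) = 0 := by
    intro a haf
    rw [Finset.mem_filter] at haf
    push_neg at haf
    obtain ⟨x₀, hx₀⟩ := haf.2
    set g : Vec n → ZMod 2 := fun x => dotp b (Dder F a x) with hg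
    set L : Vec n → ZMod 2 := fun x => g x + g 0 with hL
    have hadd : ∀ x y, L (x + y) = L x + L y := by
      intro x y
      have hs := g_shift hq b a x y
      have key : ∀ A B C D : ZMod 2, A + B = C + D → A + D = (B + D) + (C + D) := by
        decide
      exact key _ _ _ _ hs
    have hne : ∃ y, L y = 1 := by
      refine ⟨x₀, ?_⟩
      have key : ∀ u v : ZMod 2, u ≠ v → u + v = 1 := by decide
      exact key _ _ hx₀
    have hsplit : ∀ x : Vec n, (-1:ℤ) ^ ((g x + dotp c a).val)
        = (-1:ℤ) ^ ((L x).val) * (-1:ℤ) ^ ((g 0 + dotp c a).val) := by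
      intro x
      rw [← chi_add]
      simp only [hL]
      have key : ∀ A B C : ZMod 2, A + C = (A + B) + (B + C) := by decide
      exact congrArg (fun v => (-1:ℤ) ^ v) (congrArg ZMod.val (key _ _ _))
    calc ∑ x : Vec n, (-1:ℤ) ^ ((g x + dotp c a).val)
        = ∑ x : Vec n, (-1:ℤ) ^ ((L x).val) * (-1:ℤ) ^ ((g 0 + dotp c a).val) :=
          Finset.sum_congr rfl fun x _ => hsplit x
      _ = (∑ x : Vec n, (-1:ℤ) ^ ((L x).val)) * (-1:ℤ) ^ ((g 0 + dotp c a).val) :=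
          (Finset.sum_mul _ _ _).symm
      _ = 0 := by rw [sum_chi_zero L hadd hne, zero_mul]
  rw [Finset.sum_eq_zero hzero, add_zero]
  rw [Finset.mul_sum]
  refine Finset.sum_congr rfl fun a haf => ?_
  rw [Finset.mem_filter] at haf
  have hconst : ∀ x : Vec n,
      (-1:ℤ) ^ ((dotp b (Dder F a x) + dotp c a).val)
      = (-1:ℤ) ^ ((dotp c a + dotp b (Dder F a 0)).val) := by
    intro x
    rw [haf.2 x, add_comm]
  rw [Finset.sum_congr rfl fun x _ => hconst x, Finset.sum_const, Finset.card_univ]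
  simp [mul_comm]

private lemma eps_zero {n : ℕ} (F : Vec n → Vec n) (b : Vec n) :
    dotp b (Dder F 0 0) = 0 := by
  simp [Dder, vadd_self, dotp_zero_right]

private lemma zero_mem_P {n : ℕ} (F : Vec n → Vec n) (b : Vec n) :
    ∀ x, dotp b (Dder F 0 x) = dotp b (Dder F 0 0) := (Sc F b).zero_mem

/-- Dichotomy for the subgroup character sum. -/
private lemma Tsum_dichotomy {n : ℕ} (F : Vec n → Vec n) (b c : Vec n) :
    (∑ a ∈ univ.filter (fun a => ∀ x, dotp b (Dder F a x) = dotp b (Dder F a 0)),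
        (-1:ℤ) ^ ((dotp c a + dotp b (Dder F a 0)).val)) = 0 ∨
    (∑ a ∈ univ.filter (fun a => ∀ x, dotp b (Dder F a x) = dotp b (Dder F a 0)),
        (-1:ℤ) ^ ((dotp c a + dotp b (Dder F a 0)).val))
      = (univ.filter (fun a => ∀ x, dotp b (Dder F a x) = dotp b (Dder F a 0))).card := by
  classical
  set P := univ.filter (fun a => ∀ x, dotp b (Dder F a x) = dotp b (Dder F a 0)) with hP
  have hmemP : ∀ a, a ∈ P ↔ a ∈ Sc F b := by
    intro a; rw [hP, Finset.mem_filter]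
    exact ⟨fun h => h.2, fun h => ⟨mem_univ _, h⟩⟩
  set g : Vec n → ZMod 2 := fun a => dotp c a + dotp b (Dder F a 0) with hg
  have hgadd : ∀ a y, a ∈ P → y ∈ P → g (a + y) = g a + g y := by
    intro a y haP hyP
    have hyS : ∀ x, dotp b (Dder F y x) = dotp b (Dder F y 0) := by
      have := (hmemP y).mp hyP; exact this
    have heps : dotp b (Dder F (a + y) 0) = dotp b (Dder F a 0) + dotp b (Dder F y 0) := by
      rw [Dder_add, dotp_add_right, hyS (0 + a)]
    simp only [hg]
    rw [heps, dotp_add_right]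
    have key : ∀ A B C D : ZMod 2, (A + B) + (C + D) = (A + C) + (B + D) := by decide
    exact key _ _ _ _
  by_cases hex : ∃ y ∈ P, g y = 1
  · left
    obtain ⟨y, hyP, hy1⟩ := hex
    refine sum_chi_zero_finset P g y ?_ ?_
    · intro a haP
      exact (hmemP _).mpr ((Sc F b).add_mem ((hmemP _).mp haP) ((hmemP _).mp hyP))
    · intro a haP
      rw [hgadd a y haP hyP, hy1]
  · right
    push_neg at hex
    have hall : ∀ a ∈ P, (-1:ℤ) ^ ((g a).val) = 1 := by
      intro a haP
      have h0 : g a = 0 := by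
        rcases zmod2_cases (g a) with h | h
        · exact h
        · exact absurd h (hex a haP)
      rw [h0]
      rfl
    rw [Finset.sum_congr rfl hall, Finset.sum_const]
    simp

private lemma exists_Tsum_ne {n : ℕ} (F : Vec n → Vec n) (b : Vec n) :
    ∃ c : Vec n,
      (∑ a ∈ univ.filter (fun a => ∀ x, dotp b (Dder F a x) = dotp b (Dder F a 0)),
        (-1:ℤ) ^ ((dotp c a + dotp b (Dder F a 0)).val)) ≠ 0 := by
  classical
  set P := univ.filter (fun a => ∀ x, dotp b (Dder F a x) = dotp b (Dder F a 0)) with hP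
  have h0P : (0 : Vec n) ∈ P := by
    rw [hP, Finset.mem_filter]
    exact ⟨mem_univ _, zero_mem_P F b⟩
  have hzeroterm : ∑ c : Vec n, (-1:ℤ) ^ ((dotp c (0:Vec n) + dotp b (Dder F 0 0)).val)
      = 2 ^ n := by
    have h1 : ∀ c : Vec n, dotp c (0:Vec n) + dotp b (Dder F 0 0) = 0 := by
      intro c; rw [dotp_zero_right, eps_zero, add_zero]
    rw [Finset.sum_congr rfl (fun c _ => by rw [h1 c])]
    simp [Finset.card_univ]
  have hother : ∀ a ∈ P, a ≠ 0 →
      ∑ c : Vec n, (-1:ℤ) ^ ((dotp c a + dotp b (Dder F a 0)).val) = 0 := by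
    intro a _ hane
    have hsplit : ∀ c0 : Vec n, (-1:ℤ) ^ ((dotp c0 a + dotp b (Dder F a 0)).val)
        = (-1:ℤ) ^ ((dotp c0 a).val) * (-1:ℤ) ^ ((dotp b (Dder F a 0)).val) :=
      fun c0 => chi_add _ _
    have hne : ∃ y : Vec n, dotp y a = 1 := by
      obtain ⟨y, hy⟩ := exists_dotp_one hane
      exact ⟨y, by rw [dotp_comm]; exact hy⟩
    rw [Finset.sum_congr rfl (fun c0 _ => hsplit c0), ← Finset.sum_mul,
      sum_chi_zero (fun c0 => dotp c0 a) (fun x y => dotp_add_left x y a) hne, zero_mul]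
  have hsum : ∑ c : Vec n, ∑ a ∈ P,
      (-1:ℤ) ^ ((dotp c a + dotp b (Dder F a 0)).val) = 2 ^ n := by
    rw [Finset.sum_comm]
    rw [Finset.sum_eq_single_of_mem 0 h0P (fun a haP hane => hother a haP hane)]
    exact hzeroterm
  by_contra hc
  push_neg at hc
  rw [Finset.sum_eq_zero (fun c _ => hc c)] at hsum
  have : (0:ℤ) < 2 ^ n := by positivity
  omega

theorem stmt_4 {n : ℕ} (hn : Even n) (F : Vec n → Vec n) (hq : IsQuadratic F)
    (ha : IsAPN F) (b : Vec n) (hb : b ≠ 0) :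
    ∃ S : Submodule (ZMod 2) (Vec n), (S : Set (Vec n)) = Vset F b ∧
      (∀ c : Vec n, (Walsh F b c) ^ 2 = 0 ∨
        (Walsh F b c) ^ 2 = 2 ^ n * (Nat.card (Vset F b) : ℤ)) ∧
      (∀ c : Vec n, (Walsh F b c) ^ 2 = 0 ∨
        (Walsh F b c) ^ 2 = 2 ^ (n + Module.finrank (ZMod 2) S)) ∧
      (∃ c : Vec n, (Walsh F b c) ^ 2 = 2 ^ (n + Module.finrank (ZMod 2) S)) := by
  haveI : Fintype ↥(Sc F b) := Fintype.ofFinite _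
  have hA : Nat.card (Vset F b) = Nat.card ↥(Sc F b) := by
    rw [← coe_Sc ha hb]
    rfl
  have hB : Nat.card ↥(Sc F b) = 2 ^ Module.finrank (ZMod 2) (Sc F b) := by
    rw [Nat.card_eq_fintype_card, Module.card_eq_pow_finrank (K := ZMod 2), ZMod.card]
  have hC : Nat.card ↥(Sc F b)
      = (univ.filter (fun a => ∀ x, dotp b (Dder F a x) = dotp b (Dder F a 0))).card := by
    have : Nat.card ↥(Sc F b)
        = Nat.card {a : Vec n // ∀ x, dotp b (Dder F a x) = dotp b (Dder F a 0)} := rfl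
    rw [this, Nat.card_eq_fintype_card, Fintype.card_subtype]
  have hPC : ((univ.filter
      (fun a => ∀ x, dotp b (Dder F a x) = dotp b (Dder F a 0))).card : ℤ)
      = 2 ^ Module.finrank (ZMod 2) (Sc F b) := by
    rw [← hC, hB]; push_cast; ring
  refine ⟨Sc F b, coe_Sc ha hb, ?_, ?_, ?_⟩
  · intro c
    rw [walsh_sq hq b c]
    rcases Tsum_dichotomy F b c with h | h
    · left; rw [h, mul_zero]
    · right
      rw [h, hA, hC]
  · intro c
    rw [walsh_sq hq b c]
    rcases Tsum_dichotomy F b c with h | h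
    · left; rw [h, mul_zero]
    · right
      rw [h, hPC, pow_add]
  · obtain ⟨c, hc⟩ := exists_Tsum_ne F b
    refine ⟨c, ?_⟩
    rcases Tsum_dichotomy F b c with h | h
    · exact absurd h hc
    · rw [walsh_sq hq b c, h, hPC, pow_add]
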